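/- arXiv:2103.07827 — 3 statements merged into one kernel-verified Lean document; each statement's English description precedes it below -/
import Mathlib

section
/- For any complex matrices M (m×ℓ) and N (ℓ×n), the Schatten 1-norm satisfies ‖M·N‖₁ = ‖|M|·|N†|‖₁, where |X| = √(X†X). -/
open Matrix ComplexOrder

/-- Square root of a positive semidefinite matrix, with the meaning it had in Mathlib
(December 2024) under the name `Matrix.PosSemidef.sqrt` (since removed). -/
noncomputable def Matrix.PosSemidef.sqrt {n 𝕜 : Type*} [Fintype n] [DecidableEq n] [RCLike 𝕜]
    {A : Matrix n n 𝕜} (hA : A.PosSemidef) : Matrix n n 𝕜 :=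
  hA.1.eigenvectorUnitary.1 * diagonal ((↑) ∘ (√·) ∘ hA.1.eigenvalues) *
  (star hA.1.eigenvectorUnitary : Matrix n n 𝕜)

/-- The Schatten 1-norm (trace norm): ‖M‖₁ = tr √(MᴴM). -/
noncomputable def traceNorm {n m : Type*} [Fintype n] [Fintype m] [DecidableEq m]
    (M : Matrix n m ℂ) : ℝ :=
  ((Matrix.posSemidef_conjTranspose_mul_self M).sqrt.trace).re

namespace TraceNormAux

open Polynomial

variable {a b : Type*} [Fintype a] [DecidableEq a] [Fintype b] [DecidableEq b]

lemma conj_pow (U D : Matrix a a ℂ) (hU : star U * U = 1) (hU' : U * star U = 1) (n : ℕ) :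
    (U * D * star U) ^ n = U * D ^ n * star U := by
  induction n with
  | zero => simpa using hU'.symm
  | succ k ih =>
    have h : ∀ Z : Matrix a a ℂ, star U * (U * Z) = Z := fun Z => by
      rw [← mul_assoc, hU, one_mul]
    rw [pow_succ, ih, pow_succ]
    simp only [Matrix.mul_assoc, h]

lemma aeval_conj (U D : Matrix a a ℂ) (hU : star U * U = 1) (hU' : U * star U = 1) (q : ℂ[X]) :
    aeval (U * D * star U) q = U * aeval D q * star U := by
  induction q using Polynomial.induction_on' with
  | add p q hp hq => simp [hp, hq, Matrix.mul_add, Matrix.add_mul]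
  | monomial n c =>
    simp only [aeval_monomial, ← Algebra.smul_def, conj_pow U D hU hU' n,
      Matrix.smul_mul, Matrix.mul_smul]

lemma aeval_diagonal (d : a → ℂ) (q : ℂ[X]) :
    aeval (Matrix.diagonal d) q = Matrix.diagonal fun i => q.eval (d i) := by
  have h : Matrix.diagonal d = Matrix.diagonalAlgHom ℂ d := rfl
  have hfun : (aeval d q : a → ℂ) = fun i => q.eval (d i) := by
    funext i
    have h2 := aeval_algHom_apply (Pi.evalAlgHom ℂ (fun _ : a => ℂ) i) d q
    simp only [Pi.evalAlgHom_apply] at h2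
    rw [← h2, aeval_def, eval₂_eq_eval_map, Algebra.algebraMap_self, Polynomial.map_id]
  rw [h, aeval_algHom_apply]
  show Matrix.diagonal (aeval d q) = _
  rw [hfun]

lemma sqrt_eq_aeval {P : Matrix a a ℂ} (hP : P.PosSemidef) (q : ℝ[X])
    (hq : ∀ i, q.eval (hP.1.eigenvalues i) = Real.sqrt (hP.1.eigenvalues i)) :
    aeval P (q.map (algebraMap ℝ ℂ)) = hP.sqrt := by
  have hU : star (hP.1.eigenvectorUnitary : Matrix a a ℂ) * hP.1.eigenvectorUnitary = 1 :=
    Unitary.coe_star_mul_self _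
  have hU' : (hP.1.eigenvectorUnitary : Matrix a a ℂ) * star hP.1.eigenvectorUnitary = 1 :=
    Unitary.coe_mul_star_self _
  conv_lhs => rw [hP.1.spectral_theorem, Unitary.conjStarAlgAut_apply]
  rw [aeval_conj _ _ hU hU', aeval_diagonal, Matrix.PosSemidef.sqrt]
  have hdiag : (fun i => (q.map (algebraMap ℝ ℂ)).eval
      ((RCLike.ofReal ∘ hP.1.eigenvalues) i))
      = (RCLike.ofReal ∘ Real.sqrt ∘ hP.1.eigenvalues : a → ℂ) := by
    funext i
    simp only [Function.comp_apply]
    rw [eval_map, ← aeval_def]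
    show aeval (algebraMap ℝ ℂ (hP.1.eigenvalues i)) q = _
    rw [aeval_algebraMap_apply_eq_algebraMap_eval, hq i]
  rw [hdiag]

lemma mul_pow_comm (X : Matrix a b ℂ) (n : ℕ) :
    X * (Xᴴ * X) ^ n = (X * Xᴴ) ^ n * X := by
  induction n with
  | zero => simp
  | succ k ih =>
    rw [pow_succ, pow_succ, ← Matrix.mul_assoc, ih]
    simp only [Matrix.mul_assoc]

lemma mul_aeval_comm (X : Matrix a b ℂ) (r : ℂ[X]) :
    X * aeval (Xᴴ * X) r = aeval (X * Xᴴ) r * X := by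
  induction r using Polynomial.induction_on' with
  | add p q hp hq => simp [Matrix.mul_add, Matrix.add_mul, hp, hq]
  | monomial n c =>
    simp only [aeval_monomial, ← Algebra.smul_def, Matrix.smul_mul, Matrix.mul_smul,
      mul_pow_comm X n]

lemma sqrt_congr {P Q : Matrix a a ℂ} (h : P = Q) (hP : P.PosSemidef) (hQ : Q.PosSemidef) :
    hP.sqrt = hQ.sqrt := by subst h; rfl

lemma trace_sqrt_comm (X : Matrix a b ℂ) :
    (Matrix.posSemidef_conjTranspose_mul_self X).sqrt.trace =
    (Matrix.posSemidef_self_mul_conjTranspose X).sqrt.trace := by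
  classical
  set hP := Matrix.posSemidef_conjTranspose_mul_self X with hPdef
  set hQ := Matrix.posSemidef_self_mul_conjTranspose X with hQdef
  set S : Finset ℝ := insert 0
    (Finset.image hP.1.eigenvalues Finset.univ ∪ Finset.image hQ.1.eigenvalues Finset.univ)
    with hSdef
  set q : ℝ[X] := Lagrange.interpolate S id Real.sqrt with hqdef
  have hqeval : ∀ x ∈ S, q.eval x = Real.sqrt x := by
    intro x hx
    simpa [hqdef] using Lagrange.eval_interpolate_at_node (v := id) (r := Real.sqrt)
      (Set.injOn_id _) hx
  have hq0 : q.eval 0 = 0 := by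
    rw [hqeval 0 (Finset.mem_insert_self _ _), Real.sqrt_zero]
  obtain ⟨r, hr⟩ : (Polynomial.X : ℝ[X]) ∣ q := by
    rw [Polynomial.X_dvd_iff, Polynomial.coeff_zero_eq_eval_zero, hq0]
  set q' : ℂ[X] := q.map (algebraMap ℝ ℂ) with hq'def
  set r' : ℂ[X] := r.map (algebraMap ℝ ℂ) with hr'def
  have hq' : q' = Polynomial.X * r' := by
    rw [hq'def, hr, Polynomial.map_mul, Polynomial.map_X]
  have hPs : aeval (Xᴴ * X) q' = hP.sqrt := by
    apply sqrt_eq_aeval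
    intro i
    exact hqeval _ (Finset.mem_insert_of_mem (Finset.mem_union_left _
      (Finset.mem_image_of_mem _ (Finset.mem_univ i))))
  have hQs : aeval (X * Xᴴ) q' = hQ.sqrt := by
    apply sqrt_eq_aeval
    intro i
    exact hqeval _ (Finset.mem_insert_of_mem (Finset.mem_union_right _
      (Finset.mem_image_of_mem _ (Finset.mem_univ i))))
  rw [← hPs, ← hQs, hq']
  simp only [_root_.map_mul, aeval_X]
  calc ((Xᴴ * X) * aeval (Xᴴ * X) r').trace
      = (Xᴴ * (X * aeval (Xᴴ * X) r')).trace := by rw [Matrix.mul_assoc]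
    _ = ((X * aeval (Xᴴ * X) r') * Xᴴ).trace := by rw [Matrix.trace_mul_comm]
    _ = ((aeval (X * Xᴴ) r' * X) * Xᴴ).trace := by rw [mul_aeval_comm]
    _ = (aeval (X * Xᴴ) r' * (X * Xᴴ)).trace := by rw [Matrix.mul_assoc]
    _ = ((X * Xᴴ) * aeval (X * Xᴴ) r').trace := by rw [Matrix.trace_mul_comm]

lemma sqrt_hermitian {P : Matrix a a ℂ} (hP : P.PosSemidef) : (hP.sqrt)ᴴ = hP.sqrt := by
  unfold Matrix.PosSemidef.sqrt
  rw [Matrix.conjTranspose_mul, Matrix.conjTranspose_mul, Matrix.diagonal_conjTranspose]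
  simp only [Matrix.star_eq_conjTranspose, Matrix.conjTranspose_conjTranspose, Matrix.mul_assoc]
  congr 3
  funext i
  simp

lemma sqrt_mul_self' {P : Matrix a a ℂ} (hP : P.PosSemidef) : hP.sqrt * hP.sqrt = P := by
  have hU : star (hP.1.eigenvectorUnitary : Matrix a a ℂ) * hP.1.eigenvectorUnitary = 1 :=
    Unitary.coe_star_mul_self _
  have h : ∀ Z : Matrix a a ℂ,
      star (hP.1.eigenvectorUnitary : Matrix a a ℂ) * (hP.1.eigenvectorUnitary * Z) = Z :=
    fun Z => by rw [← Matrix.mul_assoc, hU, Matrix.one_mul]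
  conv_rhs => rw [hP.1.spectral_theorem, Unitary.conjStarAlgAut_apply]
  unfold Matrix.PosSemidef.sqrt
  simp only [Matrix.mul_assoc, h]
  rw [← Matrix.mul_assoc (diagonal _) (diagonal _), Matrix.diagonal_mul_diagonal]
  congr 3
  funext i
  simp only [Function.comp_apply]
  rw [← RCLike.ofReal_mul, Real.mul_self_sqrt (hP.eigenvalues_nonneg i)]

end TraceNormAux

set_option maxHeartbeats 1000000 in
/-- ‖M·N‖₁ = ‖|M|·|Nᴴ|‖₁ where |X| = √(XᴴX). -/
theorem traceNorm_mul_eq_traceNorm_abs_mul_abs {m l n : ℕ}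
    (M : Matrix (Fin m) (Fin l) ℂ) (N : Matrix (Fin l) (Fin n) ℂ) :
    traceNorm (M * N) =
      traceNorm ((Matrix.posSemidef_conjTranspose_mul_self M).sqrt *
        (Matrix.posSemidef_conjTranspose_mul_self Nᴴ).sqrt) := by
  set A := (Matrix.posSemidef_conjTranspose_mul_self M).sqrt with hAdef
  set B := (Matrix.posSemidef_conjTranspose_mul_self Nᴴ).sqrt with hBdef
  have hAH : Aᴴ = A := TraceNormAux.sqrt_hermitian _
  have hBH : Bᴴ = B := TraceNormAux.sqrt_hermitian _
  have hA2 : A * A = Mᴴ * M := TraceNormAux.sqrt_mul_self' _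
  have hB2 : B * B = N * Nᴴ := by
    calc B * B = Nᴴᴴ * Nᴴ := TraceNormAux.sqrt_mul_self' _
      _ = N * Nᴴ := by rw [Matrix.conjTranspose_conjTranspose]
  unfold traceNorm
  congr 1
  have e1 : (M * N)ᴴ * (M * N) = (A * N)ᴴ * (A * N) := by
    rw [Matrix.conjTranspose_mul, Matrix.conjTranspose_mul, hAH]
    calc Nᴴ * Mᴴ * (M * N) = Nᴴ * (Mᴴ * M) * N := by simp only [Matrix.mul_assoc]
      _ = Nᴴ * (A * A) * N := by rw [hA2]
      _ = Nᴴ * A * (A * N) := by simp only [Matrix.mul_assoc]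
  have e2 : (A * N) * (A * N)ᴴ = (B * A)ᴴ * (B * A) := by
    rw [Matrix.conjTranspose_mul, Matrix.conjTranspose_mul, hAH, hBH]
    calc A * N * (Nᴴ * A) = A * (N * Nᴴ) * A := by simp only [Matrix.mul_assoc]
      _ = A * (B * B) * A := by rw [hB2]
      _ = A * B * (B * A) := by simp only [Matrix.mul_assoc]
  have e3 : (B * A) * (B * A)ᴴ = (A * B)ᴴ * (A * B) := by
    rw [Matrix.conjTranspose_mul, Matrix.conjTranspose_mul, hAH, hBH]
  calc (Matrix.posSemidef_conjTranspose_mul_self (M * N)).sqrt.trace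
      = (Matrix.posSemidef_conjTranspose_mul_self (A * N)).sqrt.trace :=
        congrArg Matrix.trace (TraceNormAux.sqrt_congr e1 _ _)
    _ = (Matrix.posSemidef_self_mul_conjTranspose (A * N)).sqrt.trace :=
        TraceNormAux.trace_sqrt_comm _
    _ = (Matrix.posSemidef_conjTranspose_mul_self (B * A)).sqrt.trace :=
        congrArg Matrix.trace (TraceNormAux.sqrt_congr e2 _ _)
    _ = (Matrix.posSemidef_self_mul_conjTranspose (B * A)).sqrt.trace :=
        TraceNormAux.trace_sqrt_comm _
    _ = (Matrix.posSemidef_conjTranspose_mul_self (A * B)).sqrt.trace :=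
        congrArg Matrix.trace (TraceNormAux.sqrt_congr e3 _ _)
end

section
/- Quantum union bound (fidelity-refined form): Let ρ be a density matrix and A₁,…,A_m orthogonal projectors with tr(ρ(Id−A_t)) = ε_t. Let ρ_t denote ρ conditioned on outcomes A₁,…,A_t all succeeding when measured sequentially, let Succ be the probability that all m outcomes succeed, Fail = 1 − Succ, and Loss = Σ_t ε_t. Then 1 ≤ √Succ·√F(ρ, ρ_m) + √Fail·√Loss. -/
open Matrix ComplexOrder

section SqrtAux
open scoped MatrixOrder Matrix.Norms.L2Operator

lemma Matrix.PosSemidef.sqrt_eq_cfcSqrt {n : Type*} [Fintype n] [DecidableEq n]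
    {A : Matrix n n ℂ} (hA : A.PosSemidef) : hA.sqrt = CFC.sqrt A := by
  rw [CFC.sqrt_eq_cfc, cfc_nnreal_eq_real _ A, hA.1.cfc_eq]
  simp only [IsHermitian.cfc, Real.coe_sqrt, Real.coe_toNNReal', Unitary.conjStarAlgAut_apply,
    Matrix.PosSemidef.sqrt]
  congr 3
  funext i
  simp [max_eq_left (hA.eigenvalues_nonneg i)]

lemma Matrix.PosSemidef.posSemidef_sqrt {n : Type*} [Fintype n] [DecidableEq n]
    {A : Matrix n n ℂ} (hA : A.PosSemidef) : hA.sqrt.PosSemidef := by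
  rw [hA.sqrt_eq_cfcSqrt]; exact (CFC.sqrt_nonneg A).posSemidef

lemma Matrix.PosSemidef.sqrt_mul_self {n : Type*} [Fintype n] [DecidableEq n]
    {A : Matrix n n ℂ} (hA : A.PosSemidef) : hA.sqrt * hA.sqrt = A := by
  rw [hA.sqrt_eq_cfcSqrt]; exact CFC.sqrt_mul_sqrt_self A hA.nonneg

lemma Matrix.PosSemidef.sq_sqrt {n : Type*} [Fintype n] [DecidableEq n]
    {A : Matrix n n ℂ} (hA : A.PosSemidef) : hA.sqrt ^ 2 = A := by
  rw [sq, hA.sqrt_mul_self]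

lemma Matrix.PosSemidef.eq_sqrt_of_sq_eq {n : Type*} [Fintype n] [DecidableEq n]
    {A : Matrix n n ℂ} (hA : A.PosSemidef) {B : Matrix n n ℂ} (hB : B.PosSemidef)
    (hAB : A ^ 2 = B) : A = hB.sqrt := by
  rw [hB.sqrt_eq_cfcSqrt, eq_comm, CFC.sqrt_eq_iff B A hB.nonneg hA.nonneg, ← sq, hAB]

end SqrtAux

set_option linter.unusedSectionVars false
set_option maxHeartbeats 1000000
set_option linter.unusedSectionVars false
set_option maxHeartbeats 1000000

namespace QUB

variable {n : Type*} [Fintype n] [DecidableEq n]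

lemma cnonneg_iff (z : ℂ) : 0 ≤ z ↔ 0 ≤ z.re ∧ z.im = 0 := by
  constructor
  · intro h; exact ⟨(Complex.le_def.mp h).1, ((Complex.le_def.mp h).2).symm⟩
  · intro ⟨h1, h2⟩; exact Complex.le_def.mpr ⟨h1, h2.symm⟩

lemma psd_diag_nonneg {A : Matrix n n ℂ} (hA : A.PosSemidef) (i : n) : 0 ≤ A i i := by
  have h := hA.dotProduct_mulVec_nonneg (Pi.single i 1)
  have hs : star (Pi.single i 1 : n → ℂ) = Pi.single i 1 := by
    ext j; by_cases h : j = i <;> simp [Pi.single_apply, h]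
  simpa [hs, single_dotProduct] using h

lemma psd_trace_nonneg {A : Matrix n n ℂ} (hA : A.PosSemidef) : 0 ≤ A.trace := by
  unfold Matrix.trace
  exact Finset.sum_nonneg fun i _ => psd_diag_nonneg hA i

lemma psd_trace_re_nonneg {A : Matrix n n ℂ} (hA : A.PosSemidef) : 0 ≤ A.trace.re :=
  ((cnonneg_iff _).mp (psd_trace_nonneg hA)).1

lemma psd_trace_im {A : Matrix n n ℂ} (hA : A.PosSemidef) : A.trace.im = 0 :=
  ((cnonneg_iff _).mp (psd_trace_nonneg hA)).2

noncomputable def N (u : n → ℂ) : ℝ := Real.sqrt (dotProduct (star u) u).re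

lemma dot_self_re_nonneg (u : n → ℂ) : 0 ≤ (dotProduct (star u) u).re :=
  ((cnonneg_iff _).mp (dotProduct_star_self_nonneg u)).1

lemma dot_self_im (u : n → ℂ) : (dotProduct (star u) u).im = 0 :=
  ((cnonneg_iff _).mp (dotProduct_star_self_nonneg u)).2

lemma N_nonneg (u : n → ℂ) : 0 ≤ N u := Real.sqrt_nonneg _

lemma N_sq (u : n → ℂ) : N u ^ 2 = (dotProduct (star u) u).re :=
  Real.sq_sqrt (dot_self_re_nonneg u)

/-- dot product of contraction image -/
lemma dot_mulVec_conj (V : Matrix n n ℂ) (u w : n → ℂ) :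
    dotProduct (star (V *ᵥ u)) w = dotProduct (star u) (Vᴴ *ᵥ w) := by
  rw [Matrix.star_mulVec, ← Matrix.dotProduct_mulVec]

lemma contraction_mulVec {V : Matrix n n ℂ} (h : (1 - Vᴴ * V).PosSemidef) (u : n → ℂ) :
    (dotProduct (star (V *ᵥ u)) (V *ᵥ u)).re ≤ (dotProduct (star u) u).re := by
  have h2 := ((cnonneg_iff _).mp (h.dotProduct_mulVec_nonneg u)).1
  have key : dotProduct (star u) ((1 - Vᴴ * V) *ᵥ u)
      = dotProduct (star u) u - dotProduct (star (V *ᵥ u)) (V *ᵥ u) := by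
    rw [Matrix.sub_mulVec, dotProduct_sub, dot_mulVec_conj, Matrix.mulVec_mulVec,
      Matrix.one_mulVec]
  rw [key] at h2
  simp only [Complex.sub_re] at h2
  linarith

lemma N_mulVec_le {V : Matrix n n ℂ} (h : (1 - Vᴴ * V).PosSemidef) (u : n → ℂ) :
    N (V *ᵥ u) ≤ N u :=
  Real.sqrt_le_sqrt (contraction_mulVec h u)
/-- Cauchy–Schwarz for the complex dot product. -/
lemma dot_cs (u w : n → ℂ) : ‖dotProduct (star u) w‖ ≤ N u * N w := by
  have h := @norm_inner_le_norm ℂ (EuclideanSpace ℂ n) _ _ _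
    ((WithLp.equiv 2 _).symm u) ((WithLp.equiv 2 _).symm w)
  rw [show ∀ x y : n → ℂ, inner ℂ ((WithLp.equiv 2 (n → ℂ)).symm x) ((WithLp.equiv 2 (n → ℂ)).symm y)
      = dotProduct (star x) y from fun x y => by rw [dotProduct_comm]; rfl] at h
  have hn : ∀ v : n → ℂ, ‖(WithLp.equiv 2 (n → ℂ)).symm v‖ = N v := by
    intro v
    rw [EuclideanSpace.norm_eq]
    unfold N
    congr 1
    simp only [dotProduct, Pi.star_apply, Complex.re_sum]
    refine Finset.sum_congr rfl fun i _ => ?_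
    rw [Complex.mul_re]
    simp [Complex.star_def]
    rw [Complex.sq_norm, Complex.normSq_apply]
  rw [hn u, hn w] at h
  exact h

lemma contraction_flip {V : Matrix n n ℂ} (h : (1 - V * Vᴴ).PosSemidef) :
    (1 - Vᴴ * V).PosSemidef := by
  have h' : (1 - (Vᴴ)ᴴ * Vᴴ).PosSemidef := by rwa [conjTranspose_conjTranspose]
  refine Matrix.PosSemidef.of_dotProduct_mulVec_nonneg ?_ ?_
  · have : (1 - Vᴴ * V)ᴴ = 1 - Vᴴ * V := by
      simp [conjTranspose_sub, conjTranspose_mul]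
    exact this
  · intro x
    rw [cnonneg_iff]
    have key : dotProduct (star x) ((1 - Vᴴ * V) *ᵥ x)
        = dotProduct (star x) x - dotProduct (star (V *ᵥ x)) (V *ᵥ x) := by
      rw [Matrix.sub_mulVec, dotProduct_sub, dot_mulVec_conj, Matrix.mulVec_mulVec,
        Matrix.one_mulVec]
    rw [key]
    constructor
    · simp only [Complex.sub_re, sub_nonneg]
      -- show ‖Vx‖² ≤ ‖x‖²
      have hy : (dotProduct (star (V *ᵥ x)) (V *ᵥ x)).re = N (V *ᵥ x) ^ 2 :=
        (N_sq _).symm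
      have hX : (dotProduct (star x) x).re = N x ^ 2 := (N_sq _).symm
      rw [hy, hX]
      have hNN : N (V *ᵥ x) ≤ N x := by
        by_cases hz : N (V *ᵥ x) = 0
        · rw [hz]; exact N_nonneg x
        · have hpos : 0 < N (V *ᵥ x) := lt_of_le_of_ne (N_nonneg _) (Ne.symm hz)
          have step : N (V *ᵥ x) ^ 2 ≤ N x * N (V *ᵥ x) := by
            have e1 : dotProduct (star (V *ᵥ x)) (V *ᵥ x)
                = dotProduct (star x) (Vᴴ *ᵥ (V *ᵥ x)) := dot_mulVec_conj V x _
            have e2 : N (V *ᵥ x) ^ 2 ≤ ‖dotProduct (star x) (Vᴴ *ᵥ (V *ᵥ x))‖ := by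
              rw [← e1, N_sq]
              exact Complex.re_le_norm _
            refine e2.trans ((dot_cs x _).trans ?_)
            have := N_mulVec_le h' (V *ᵥ x)
            exact mul_le_mul_of_nonneg_left this (N_nonneg x)
          nlinarith [step, hpos]
      exact pow_le_pow_left₀ (N_nonneg _) hNN 2
    · simp only [Complex.sub_im, dot_self_im, sub_zero]

lemma contraction_mul {V W : Matrix n n ℂ} (hV : (1 - Vᴴ * V).PosSemidef)
    (hW : (1 - Wᴴ * W).PosSemidef) : (1 - (V * W)ᴴ * (V * W)).PosSemidef := by
  have h1 : (Wᴴ * (1 - Vᴴ * V) * W).PosSemidef := hV.conjTranspose_mul_mul_same W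
  have h2 := hW.add h1
  have : 1 - Wᴴ * W + Wᴴ * (1 - Vᴴ * V) * W = 1 - (V * W)ᴴ * (V * W) := by
    simp only [conjTranspose_mul]
    noncomm_ring
  rwa [this] at h2
lemma polar_left (Y : Matrix n n ℂ) (h : (Y * Yᴴ).PosSemidef) :
    ∃ V : Matrix n n ℂ, Y = h.sqrt * V ∧ (1 - Vᴴ * V).PosSemidef := by
  set U : Matrix n n ℂ := h.1.eigenvectorUnitary.1 with hU
  set lam : n → ℝ := h.1.eigenvalues with hlam
  have hUU : star U * U = 1 := Matrix.mem_unitaryGroup_iff'.mp h.1.eigenvectorUnitary.2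
  have hUU' : U * star U = 1 := Matrix.mem_unitaryGroup_iff.mp h.1.eigenvectorUnitary.2
  set sq : n → ℂ := fun i => (Real.sqrt (lam i) : ℂ) with hsq'
  have hsqrt : h.sqrt = U * Matrix.diagonal sq * star U := rfl
  set g : n → ℂ := fun i => if lam i = 0 then 0 else ((Real.sqrt (lam i) : ℂ))⁻¹ with hg
  set p : n → ℂ := fun i => if lam i = 0 then 0 else 1 with hp
  have hconj : ∀ a b : n → ℂ, (U * Matrix.diagonal a * star U) * (U * Matrix.diagonal b * star U)
      = U * Matrix.diagonal (a * b) * star U := by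
    intro a b
    have h1 : (star U) * (U * (Matrix.diagonal b * star U)) = Matrix.diagonal b * star U := by
      rw [← mul_assoc, hUU, one_mul]
    calc (U * Matrix.diagonal a * star U) * (U * Matrix.diagonal b * star U)
        = U * (Matrix.diagonal a * ((star U) * (U * (Matrix.diagonal b * star U)))) := by
          simp only [mul_assoc]
      _ = U * (Matrix.diagonal a * (Matrix.diagonal b * star U)) := by rw [h1]
      _ = U * (Matrix.diagonal a * Matrix.diagonal b) * star U := by simp only [mul_assoc]
      _ = U * Matrix.diagonal (a * b) * star U := by rw [Matrix.diagonal_mul_diagonal]; rfl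
  have hlam_nonneg : ∀ i, 0 ≤ lam i := fun i => h.eigenvalues_nonneg i
  have hsqne : ∀ i, lam i ≠ 0 → (sq i : ℂ) ≠ 0 := by
    intro i hi
    simp only [hsq', ne_eq, Complex.ofReal_eq_zero]
    exact (Real.sqrt_ne_zero (hlam_nonneg i)).mpr hi
  have f1 : sq * g = p := by
    funext i
    simp only [Pi.mul_apply, hg, hp]
    by_cases hi : lam i = 0
    · simp [hi, hsq']
    · rw [if_neg hi, if_neg hi, mul_inv_cancel₀ (hsqne i hi)]
  have f2 : g * sq = p := by rw [mul_comm, f1]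
  have f3 : p * sq = sq := by
    funext i
    simp only [Pi.mul_apply, hp]
    by_cases hi : lam i = 0
    · simp [hi, hsq', Real.sqrt_eq_zero', hi.le]
    · rw [if_neg hi, one_mul]
  have f4 : p * p = p := by
    funext i
    simp only [Pi.mul_apply, hp]
    by_cases hi : lam i = 0 <;> simp [hi]
  set Pinv : Matrix n n ℂ := U * Matrix.diagonal g * star U with hPinvdef
  set P : Matrix n n ℂ := U * Matrix.diagonal p * star U with hPdef
  set V : Matrix n n ℂ := Pinv * Y with hVdef
  have hsP : h.sqrt * Pinv = P := by rw [hsqrt, hPinvdef, hconj, f1]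
  have hPs : Pinv * h.sqrt = P := by rw [hsqrt, hPinvdef, hconj, f2]
  have hPsq : P * h.sqrt = h.sqrt := by rw [hsqrt, hPdef, hconj, f3]
  have hstarp : star p = p := by
    funext i
    simp only [Pi.star_apply, hp]
    by_cases hi : lam i = 0 <;> simp [hi]
  have hPh : Pᴴ = P := by
    rw [hPdef]
    simp only [conjTranspose_mul, Matrix.diagonal_conjTranspose, hstarp,
      Matrix.star_eq_conjTranspose, conjTranspose_conjTranspose]
    simp only [mul_assoc]
  set E : Matrix n n ℂ := 1 - P with hEdef
  have hEh : Eᴴ = E := by rw [hEdef, conjTranspose_sub, conjTranspose_one, hPh]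
  have hE : E * h.sqrt = 0 := by rw [hEdef, sub_mul, one_mul, hPsq, sub_self]
  have hE2 : h.sqrt * E = 0 := by
    have := congrArg conjTranspose hE
    simpa [conjTranspose_mul, hEh, h.posSemidef_sqrt.isHermitian.eq] using this
  have hYE : E * Y = 0 := by
    have hz : (E * Y) * (E * Y)ᴴ = 0 := by
      calc (E * Y) * (E * Y)ᴴ = E * (Y * Yᴴ) * Eᴴ := by
            rw [conjTranspose_mul]; noncomm_ring
        _ = (E * h.sqrt) * (h.sqrt * E) := by
            rw [hEh, show (E * h.sqrt) * (h.sqrt * E) = E * (h.sqrt * h.sqrt) * E from by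
              noncomm_ring, h.sqrt_mul_self]
        _ = 0 := by rw [hE, zero_mul]
    have hz2 : ((E * Y)ᴴ)ᴴ * (E * Y)ᴴ = 0 := by rwa [conjTranspose_conjTranspose]
    have := Matrix.conjTranspose_mul_self_eq_zero.mp hz2
    rwa [Matrix.conjTranspose_eq_zero] at this
  refine ⟨V, ?_, ?_⟩
  · rw [hVdef, ← mul_assoc, hsP]
    have : P * Y = Y - E * Y := by rw [hEdef]; noncomm_ring
    rw [this, hYE, sub_zero]
  · apply contraction_flip
    have hstarg : star g = g := by
      funext i
      simp only [Pi.star_apply, hg]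
      by_cases hi : lam i = 0 <;> simp [hi, Complex.star_def, ← Complex.ofReal_inv]
    have hPinvh : Pinvᴴ = Pinv := by
      rw [hPinvdef]
      simp only [conjTranspose_mul, Matrix.diagonal_conjTranspose, hstarg,
        Matrix.star_eq_conjTranspose, conjTranspose_conjTranspose]
      simp only [mul_assoc]
    have hVV : V * Vᴴ = P := by
      calc V * Vᴴ = Pinv * (Y * Yᴴ) * Pinvᴴ := by
            rw [hVdef, conjTranspose_mul]; noncomm_ring
        _ = (Pinv * h.sqrt) * (h.sqrt * Pinv) := by
            rw [hPinvh, show (Pinv * h.sqrt) * (h.sqrt * Pinv) = Pinv * (h.sqrt * h.sqrt) * Pinv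
              from by noncomm_ring, h.sqrt_mul_self]
        _ = P * P := by rw [hPs, hsP]
        _ = P := by rw [hPdef, hconj, f4]
    rw [hVV]
    have this2 : (1 : Matrix n n ℂ) - P = U * Matrix.diagonal (fun i => 1 - p i) * star U := by
      have expand : Matrix.diagonal (fun i => (1:ℂ) - p i)
          = Matrix.diagonal (fun _ => (1:ℂ)) - Matrix.diagonal p := by
        rw [Matrix.diagonal_sub]
      rw [expand, Matrix.mul_sub, Matrix.sub_mul, Matrix.diagonal_one, mul_one, hUU', hPdef]
    rw [this2]
    have hdiag : (Matrix.diagonal (fun i => (1:ℂ) - p i)).PosSemidef := by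
      apply Matrix.PosSemidef.diagonal
      intro i
      simp only [hp]
      by_cases hi : lam i = 0 <;> simp [hi]
    have h3 := hdiag.mul_mul_conjTranspose_same U
    rw [Matrix.star_eq_conjTranspose]
    exact h3
lemma polar_right (X : Matrix n n ℂ) :
    ∃ W : Matrix n n ℂ, X = W * (Matrix.posSemidef_conjTranspose_mul_self X).sqrt ∧
      (1 - Wᴴ * W).PosSemidef := by
  have h2 : (Xᴴ * (Xᴴ)ᴴ).PosSemidef := by
    rw [conjTranspose_conjTranspose]
    exact Matrix.posSemidef_conjTranspose_mul_self X
  obtain ⟨V, hXV, hV⟩ := polar_left Xᴴ h2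
  have hQR : h2.sqrt = (Matrix.posSemidef_conjTranspose_mul_self X).sqrt := by
    apply Matrix.PosSemidef.eq_sqrt_of_sq_eq h2.posSemidef_sqrt
    rw [h2.sq_sqrt, conjTranspose_conjTranspose]
  refine ⟨Vᴴ, ?_, ?_⟩
  · calc X = (Xᴴ)ᴴ := (conjTranspose_conjTranspose X).symm
      _ = (h2.sqrt * V)ᴴ := congrArg conjTranspose hXV
      _ = Vᴴ * h2.sqrt := by rw [conjTranspose_mul, h2.posSemidef_sqrt.isHermitian.eq]
      _ = Vᴴ * (Matrix.posSemidef_conjTranspose_mul_self X).sqrt := by rw [hQR]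
  · have := contraction_flip (V := Vᴴ) (by rwa [conjTranspose_conjTranspose])
    exact this

lemma trace_contraction_psd {C R : Matrix n n ℂ} (hC : (1 - Cᴴ * C).PosSemidef)
    (hR : R.PosSemidef) : ‖(C * R).trace‖ ≤ R.trace.re := by
  set S : Matrix n n ℂ := hR.sqrt with hSdef
  have hSh : Sᴴ = S := hR.posSemidef_sqrt.isHermitian.eq
  have hSS : S * S = R := hR.sqrt_mul_self
  have hSapp : ∀ a b, S a b = star (S b a) := fun a b => by
    conv_lhs => rw [← hSh]
    rw [Matrix.conjTranspose_apply]
  have htr : (C * R).trace = (S * C * S).trace := by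
    rw [← hSS, Matrix.trace_mul_comm, mul_assoc, Matrix.trace_mul_comm]
  have hentry : ∀ i, (S * C * S) i i
      = dotProduct (star (fun j => S j i)) (C *ᵥ (fun j => S j i)) := by
    intro i
    simp only [Matrix.mul_apply, Matrix.mulVec, dotProduct, Pi.star_apply,
      Finset.sum_mul, Finset.mul_sum]
    rw [Finset.sum_comm]
    refine Finset.sum_congr rfl fun j _ => Finset.sum_congr rfl fun k _ => ?_
    rw [hSapp i j]
    ring
  have hbound : ∀ i, ‖(S * C * S) i i‖
      ≤ (dotProduct (star (fun j => S j i)) (fun j => S j i)).re := by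
    intro i
    rw [hentry i]
    set u : n → ℂ := fun j => S j i
    calc ‖dotProduct (star u) (C *ᵥ u)‖ ≤ N u * N (C *ᵥ u) := dot_cs u _
      _ ≤ N u * N u := mul_le_mul_of_nonneg_left (N_mulVec_le hC u) (N_nonneg u)
      _ = (dotProduct (star u) u).re := by rw [← sq, N_sq]
  have hsum : ∑ i, (dotProduct (star (fun j => S j i)) (fun j => S j i)).re
      = R.trace.re := by
    rw [← hSS]
    simp only [Matrix.trace, Matrix.diag, Matrix.mul_apply, dotProduct, Pi.star_apply,
      Complex.re_sum]
    refine Finset.sum_congr rfl fun i _ => Finset.sum_congr rfl fun j _ => ?_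
    rw [hSapp i j]
  calc ‖(C * R).trace‖ = ‖∑ i, (S * C * S) i i‖ := by rw [htr]; rfl
    _ ≤ ∑ i, ‖(S * C * S) i i‖ := norm_sum_le _ _
    _ ≤ ∑ i, (dotProduct (star (fun j => S j i)) (fun j => S j i)).re :=
        Finset.sum_le_sum fun i _ => hbound i
    _ = R.trace.re := hsum
lemma fro_cs (X Y : Matrix n n ℂ) : ‖(Xᴴ * Y).trace‖
    ≤ Real.sqrt ((Xᴴ * X).trace.re) * Real.sqrt ((Yᴴ * Y).trace.re) := by
  classical
  have key : ∀ (P Q : Matrix n n ℂ),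
      dotProduct (star (fun p : n × n => P p.1 p.2)) (fun p : n × n => Q p.1 p.2)
        = (Pᴴ * Q).trace := by
    intro P Q
    simp only [dotProduct, Matrix.trace, Matrix.diag, Matrix.mul_apply,
      Matrix.conjTranspose_apply, Pi.star_apply]
    rw [Fintype.sum_prod_type, Finset.sum_comm]
  have h := dot_cs (n := n × n) (fun p => X p.1 p.2) (fun p => Y p.1 p.2)
  unfold N at h
  rw [key X Y, key X X, key Y Y] at h
  exact h

lemma psd_smul {A : Matrix n n ℂ} (hA : A.PosSemidef) {c : ℝ} (hc : 0 ≤ c) :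
    ((c : ℂ) • A).PosSemidef := by
  refine Matrix.PosSemidef.of_dotProduct_mulVec_nonneg ?_ ?_
  · have : ((c : ℂ) • A)ᴴ = star (c : ℂ) • Aᴴ := Matrix.conjTranspose_smul _ _
    rw [Matrix.IsHermitian, this, Complex.star_def, Complex.conj_ofReal, hA.1.eq]
  · intro x
    rw [Matrix.smul_mulVec, dotProduct_smul]
    rw [cnonneg_iff]
    have h1 := ((cnonneg_iff _).mp (hA.dotProduct_mulVec_nonneg x)).1
    have h2 := ((cnonneg_iff _).mp (hA.dotProduct_mulVec_nonneg x)).2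
    constructor
    · simp only [smul_eq_mul, Complex.mul_re, Complex.ofReal_re, Complex.ofReal_im, zero_mul,
        sub_zero]
      exact mul_nonneg hc h1
    · simp only [smul_eq_mul, Complex.mul_im, Complex.ofReal_re, Complex.ofReal_im, zero_mul,
        add_zero, h2, mul_zero]

lemma sqrt_smul_eq {A B : Matrix n n ℂ} (hA : A.PosSemidef) {c : ℝ} (hc : 0 ≤ c)
    (hB : B.PosSemidef) (hAB : B = ((c ^ 2 : ℝ) : ℂ) • A) :
    hB.sqrt = (c : ℂ) • hA.sqrt := by
  symm
  apply Matrix.PosSemidef.eq_sqrt_of_sq_eq (psd_smul hA.posSemidef_sqrt hc)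
  rw [smul_pow, hA.sq_sqrt, hAB, Complex.ofReal_pow]

lemma traceNorm_eq (X : Matrix n n ℂ) :
    traceNorm X = ((Matrix.posSemidef_conjTranspose_mul_self X).sqrt.trace).re := rfl

lemma traceNorm_nonneg (X : Matrix n n ℂ) : 0 ≤ traceNorm X :=
  psd_trace_re_nonneg (Matrix.posSemidef_conjTranspose_mul_self X).posSemidef_sqrt

lemma traceNorm_smul (X : Matrix n n ℂ) {c : ℝ} (hc : 0 ≤ c) :
    traceNorm ((c : ℂ) • X) = c * traceNorm X := by
  have hmat : ((c : ℂ) • X)ᴴ * ((c : ℂ) • X) = ((c ^ 2 : ℝ) : ℂ) • (Xᴴ * X) := by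
    rw [Matrix.conjTranspose_smul, Complex.star_def, Complex.conj_ofReal,
      Matrix.smul_mul, Matrix.mul_smul, smul_smul]
    push_cast
    ring_nf
  have hs := sqrt_smul_eq (Matrix.posSemidef_conjTranspose_mul_self X) hc
    (Matrix.posSemidef_conjTranspose_mul_self ((c : ℂ) • X)) hmat
  rw [traceNorm_eq, traceNorm_eq, hs, Matrix.trace_smul]
  simp [Complex.mul_re]

lemma key1 (S Y : Matrix n n ℂ) (h : (Y * Yᴴ).PosSemidef) :
    ‖(S * Y).trace‖ ≤ traceNorm (S * h.sqrt) := by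
  obtain ⟨V, hYV, hV⟩ := polar_left Y h
  obtain ⟨W, hXW, hW⟩ := polar_right (S * h.sqrt)
  have htr : (S * Y).trace = ((V * W) * (Matrix.posSemidef_conjTranspose_mul_self
      (S * h.sqrt)).sqrt).trace := by
    calc (S * Y).trace = ((S * h.sqrt) * V).trace := by
          conv_lhs => rw [hYV, ← mul_assoc]
      _ = (V * (S * h.sqrt)).trace := Matrix.trace_mul_comm _ _
      _ = (V * (W * (Matrix.posSemidef_conjTranspose_mul_self (S * h.sqrt)).sqrt)).trace := by
          conv_lhs => rw [hXW]
      _ = ((V * W) * (Matrix.posSemidef_conjTranspose_mul_self (S * h.sqrt)).sqrt).trace := by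
          rw [mul_assoc]
  rw [htr]
  exact trace_contraction_psd (contraction_mul hV hW)
    (Matrix.posSemidef_conjTranspose_mul_self (S * h.sqrt)).posSemidef_sqrt


def prodSeq {M : Type*} [Monoid M] {m : ℕ} (A : Fin m → M) : ℕ → M
  | 0 => 1
  | t + 1 => (if h : t < m then A ⟨t, h⟩ else 1) * prodSeq A t

lemma prodSeq_castSucc {M : Type*} [Monoid M] {m : ℕ} (A : Fin (m + 1) → M) :
    ∀ t, t ≤ m → prodSeq (fun i : Fin m => A i.castSucc) t = prodSeq A t := by
  intro t
  induction t with
  | zero => intro _; rfl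
  | succ t ih =>
    intro h
    have h1 : t < m := h
    have h2 : t < m + 1 := Nat.lt_succ_of_lt h1
    show (if h : t < m then A (Fin.castSucc ⟨t, h⟩) else 1) * _ = _
    rw [dif_pos h1, ih (Nat.le_of_lt h1)]
    show A ⟨t, h2⟩ * _ = (if h : t < m + 1 then A ⟨t, h⟩ else 1) * _
    rw [dif_pos h2]

lemma ofFn_reverse_prod {M : Type*} [Monoid M] : ∀ {m : ℕ} (A : Fin m → M),
    (List.ofFn A).reverse.prod = prodSeq A m := by
  intro m
  induction m with
  | zero => intro A; simp [prodSeq]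
  | succ m ih =>
    intro A
    rw [List.ofFn_succ', List.concat_eq_append, List.reverse_append]
    simp only [List.reverse_cons, List.reverse_nil, List.nil_append, List.singleton_append,
      List.prod_cons]
    rw [ih]
    show _ = (if h : m < m + 1 then A ⟨m, h⟩ else 1) * prodSeq A m
    rw [dif_pos (Nat.lt_succ_self m), prodSeq_castSucc A m le_rfl]
    rfl

end QUB

/-- Quantum union bound, fidelity-refined form:
1 ≤ √Succ·√F(ρ,ρ_m) + √Fail·√Loss. -/
theorem quantum_union_bound_refined
    {d m : ℕ} (ρ : Matrix (Fin d) (Fin d) ℂ)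
    (hρ : ρ.PosSemidef) (hρ1 : ρ.trace = 1)
    (A : Fin m → Matrix (Fin d) (Fin d) ℂ)
    (hAherm : ∀ t, (A t).IsHermitian) (hAproj : ∀ t, A t * A t = A t)
    (ε : Fin m → ℝ) (hε : ∀ t, ε t = ((ρ * (1 - A t)).trace).re)
    (ρseq : Fin (m + 1) → Matrix (Fin d) (Fin d) ℂ)
    (h0 : ρseq 0 = ρ)
    (hprob : ∀ t : Fin m, 0 < ((ρseq t.castSucc * A t).trace).re)
    (hrec : ∀ t : Fin m, ρseq t.succ =
      ((ρseq t.castSucc * A t).trace)⁻¹ • (A t * ρseq t.castSucc * A t))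
    (Succ Fail Loss : ℝ)
    (hSucc : Succ = ((((List.ofFn A).reverse.prod) * ρ * ((List.ofFn A).reverse.prod)ᴴ).trace).re)
    (hFail : Fail = 1 - Succ)
    (hLoss : Loss = ∑ t, ε t)
    (hm : (ρseq (Fin.last m)).PosSemidef) :
    1 ≤ Real.sqrt Succ * Real.sqrt (traceNorm (hρ.sqrt * hm.sqrt) ^ 2) +
      Real.sqrt Fail * Real.sqrt Loss := by
  set W : ℕ → Matrix (Fin d) (Fin d) ℂ := QUB.prodSeq A with hWdef
  set S : Matrix (Fin d) (Fin d) ℂ := hρ.sqrt with hSdef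
  have hSh : Sᴴ = S := hρ.posSemidef_sqrt.isHermitian.eq
  have hSS : S * S = ρ := hρ.sqrt_mul_self
  set c : ℕ → ℝ := fun t => ((W t * ρ * (W t)ᴴ).trace).re with hcdef
  have hpsdW : ∀ t, (W t * ρ * (W t)ᴴ).PosSemidef := fun t => hρ.mul_mul_conjTranspose_same (W t)
  have hctr : ∀ t, (W t * ρ * (W t)ᴴ).trace = ((c t : ℝ) : ℂ) := by
    intro t
    apply Complex.ext
    · simp [hcdef]
    · simp [QUB.psd_trace_im (hpsdW t)]
  have hW0 : W 0 = 1 := rfl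
  have hWsucc : ∀ t : Fin m, W (t.1 + 1) = A t * W t.1 := by
    intro t
    show (if h : t.1 < m then A ⟨t.1, h⟩ else 1) * W t.1 = A t * W t.1
    rw [dif_pos t.2]
  have hAh : ∀ t : Fin m, (A t)ᴴ = A t := fun t => (hAherm t).eq
  have hproj1 : ∀ t : Fin m, (1 - A t) * (1 - A t) = 1 - A t := by
    intro t
    calc (1 - A t) * (1 - A t) = 1 - A t - A t + A t * A t := by noncomm_ring
      _ = 1 - A t := by rw [hAproj t]; noncomm_ring
  have hc0 : c 0 = 1 := by
    have h1 : W 0 * ρ * (W 0)ᴴ = ρ := by rw [hW0]; simp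
    rw [hcdef]
    simp only [h1, hρ1, Complex.one_re]
  have htrXA : ∀ t : Fin m, ((W t.1 * ρ * (W t.1)ᴴ) * A t).trace = ((c (t.1 + 1) : ℝ) : ℂ) := by
    intro t
    have hXA : W (t.1 + 1) * ρ * (W (t.1 + 1))ᴴ = A t * (W t.1 * ρ * (W t.1)ᴴ) * A t := by
      rw [hWsucc t, conjTranspose_mul, hAh t]
      noncomm_ring
    calc ((W t.1 * ρ * (W t.1)ᴴ) * A t).trace
        = ((W t.1 * ρ * (W t.1)ᴴ) * (A t * A t)).trace := by rw [hAproj t]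
      _ = (((W t.1 * ρ * (W t.1)ᴴ) * A t) * A t).trace := by
          rw [show (W t.1 * ρ * (W t.1)ᴴ) * (A t * A t)
            = ((W t.1 * ρ * (W t.1)ᴴ) * A t) * A t from by noncomm_ring]
      _ = (A t * ((W t.1 * ρ * (W t.1)ᴴ) * A t)).trace := (Matrix.trace_mul_comm _ _).symm
      _ = (W (t.1 + 1) * ρ * (W (t.1 + 1))ᴴ).trace := by rw [← mul_assoc, ← hXA]
      _ = ((c (t.1 + 1) : ℝ) : ℂ) := hctr _
  -- main induction
  have main : ∀ t : ℕ, ∀ ht : t ≤ m, 0 < c t ∧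
      ρseq ⟨t, Nat.lt_succ_of_le ht⟩ = (((c t : ℝ) : ℂ))⁻¹ • (W t * ρ * (W t)ᴴ) := by
    intro t
    induction t with
    | zero =>
      intro ht
      have h1 : W 0 * ρ * (W 0)ᴴ = ρ := by rw [hW0]; simp
      constructor
      · rw [hc0]; norm_num
      · have h2 : (⟨0, Nat.lt_succ_of_le ht⟩ : Fin (m + 1)) = 0 := rfl
        rw [h2, h0, h1, hc0]
        norm_num
    | succ t ih =>
      intro ht
      have htm : t < m := ht
      have htle : t ≤ m := Nat.le_of_lt htm
      obtain ⟨hcpos, hρt⟩ := ih htle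
      set tf : Fin m := ⟨t, htm⟩ with htf
      have hcast : tf.castSucc = (⟨t, Nat.lt_succ_of_le htle⟩ : Fin (m + 1)) := rfl
      have hsucc : tf.succ = (⟨t + 1, Nat.lt_succ_of_le ht⟩ : Fin (m + 1)) := rfl
      have hane : ((c t : ℝ) : ℂ) ≠ 0 := Complex.ofReal_ne_zero.mpr hcpos.ne'
      have htrρA : (ρseq tf.castSucc * A tf).trace
          = (((c t : ℝ) : ℂ))⁻¹ * ((c (t + 1) : ℝ) : ℂ) := by
        rw [hcast, hρt, Matrix.smul_mul, Matrix.trace_smul, smul_eq_mul]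
        congr 1
        exact htrXA tf
      have hcpos' : 0 < c (t + 1) := by
        have hp := hprob tf
        rw [htrρA, ← Complex.ofReal_inv, ← Complex.ofReal_mul, Complex.ofReal_re] at hp
        have h2 : 0 < c t * ((c t)⁻¹ * c (t + 1)) := mul_pos hcpos hp
        rwa [← mul_assoc, mul_inv_cancel₀ hcpos.ne', one_mul] at h2
      refine ⟨hcpos', ?_⟩
      have hbne : ((c (t + 1) : ℝ) : ℂ) ≠ 0 := Complex.ofReal_ne_zero.mpr hcpos'.ne'
      rw [← hsucc, hrec tf, htrρA, hcast, hρt]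
      have h3 : A tf * ((((c t : ℝ) : ℂ))⁻¹ • (W t * ρ * (W t)ᴴ)) * A tf
          = (((c t : ℝ) : ℂ))⁻¹ • (A tf * (W t * ρ * (W t)ᴴ) * A tf) := by
        rw [Matrix.mul_smul, Matrix.smul_mul]
      rw [h3, smul_smul]
      have h4 : A tf * (W t * ρ * (W t)ᴴ) * A tf = W (t + 1) * ρ * (W (t + 1))ᴴ := by
        rw [hWsucc tf, conjTranspose_mul, hAh tf]
        noncomm_ring
      rw [h4]
      congr 1
      field_simp
  obtain ⟨hcm_pos, hρm⟩ := main m le_rfl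
  have hlast : Fin.last m = (⟨m, Nat.lt_succ_of_le le_rfl⟩ : Fin (m + 1)) := rfl
  have hMrev : (List.ofFn A).reverse.prod = W m := QUB.ofFn_reverse_prod A
  have hSuccc : Succ = c m := by
    rw [hSucc, hMrev]
  have hSucc_pos : 0 < Succ := hSuccc ▸ hcm_pos
  set σ : Matrix (Fin d) (Fin d) ℂ := ρseq (Fin.last m) with hσdef
  have hMσ : W m * ρ * (W m)ᴴ = ((Succ : ℝ) : ℂ) • σ := by
    rw [hσdef, hlast, hρm, smul_smul, hSuccc,
      mul_inv_cancel₀ (Complex.ofReal_ne_zero.mpr hcm_pos.ne'), one_smul]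
  set T : Matrix (Fin d) (Fin d) ℂ := hm.sqrt with hTdef
  set Y : Matrix (Fin d) (Fin d) ℂ := W m * S with hYdef
  have hYY : Y * Yᴴ = ((Succ : ℝ) : ℂ) • σ := by
    rw [hYdef, conjTranspose_mul, hSh, ← hMσ]
    calc (W m * S) * (S * (W m)ᴴ) = W m * (S * S) * (W m)ᴴ := by noncomm_ring
      _ = W m * ρ * (W m)ᴴ := by rw [hSS]
  have hYpsd : (Y * Yᴴ).PosSemidef := by rw [hYY]; exact QUB.psd_smul hm hSucc_pos.le
  have hsqY : hYpsd.sqrt = ((Real.sqrt Succ : ℝ) : ℂ) • T := by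
    rw [hTdef]
    exact QUB.sqrt_smul_eq hm (Real.sqrt_nonneg _) hYpsd
      (by rw [hYY, Real.sq_sqrt hSucc_pos.le])
  have htrMρ : (S * Y).trace = (W m * ρ).trace := by
    rw [hYdef]
    calc (S * (W m * S)).trace = ((W m * S) * S).trace := Matrix.trace_mul_comm _ _
      _ = (W m * (S * S)).trace := by rw [mul_assoc]
      _ = (W m * ρ).trace := by rw [hSS]
  have hbound1 : ((W m * ρ).trace).re ≤ Real.sqrt Succ * traceNorm (S * T) := by
    calc ((W m * ρ).trace).re = ((S * Y).trace).re := by rw [htrMρ]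
      _ ≤ ‖(S * Y).trace‖ := by
          exact Complex.re_le_norm _
      _ ≤ traceNorm (S * hYpsd.sqrt) := QUB.key1 S Y hYpsd
      _ = traceNorm (((Real.sqrt Succ : ℝ) : ℂ) • (S * T)) := by
          rw [hsqY, Matrix.mul_smul]
      _ = Real.sqrt Succ * traceNorm (S * T) := QUB.traceNorm_smul _ (Real.sqrt_nonneg _)
  -- second term
  have hSZS : ∀ Z : Matrix (Fin d) (Fin d) ℂ, ((S * Z) * S).trace = (Z * ρ).trace := by
    intro Z
    calc ((S * Z) * S).trace = (S * (S * Z)).trace := Matrix.trace_mul_comm _ _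
      _ = ((S * S) * Z).trace := by rw [← mul_assoc]
      _ = (Z * (S * S)).trace := Matrix.trace_mul_comm _ _
      _ = (Z * ρ).trace := by rw [hSS]
  set a : Fin m → ℝ := fun t =>
    Real.sqrt (((((1 - A t) * S)ᴴ * ((1 - A t) * S)).trace).re) with hadef
  set b : Fin m → ℝ := fun t =>
    Real.sqrt ((((((1 - A t) * W t.1) * S)ᴴ * (((1 - A t) * W t.1) * S)).trace).re) with hbdef
  have ha_nonneg : ∀ t, 0 ≤ a t := fun t => Real.sqrt_nonneg _
  have hb_nonneg : ∀ t, 0 ≤ b t := fun t => Real.sqrt_nonneg _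
  have hXmath : ∀ t : Fin m, ((1 - A t) * S)ᴴ = S * (1 - A t) := by
    intro t
    rw [conjTranspose_mul, conjTranspose_sub, conjTranspose_one, hAh t, hSh]
  have hsq_a : ∀ t, a t ^ 2 = ε t := by
    intro t
    rw [hadef]
    rw [Real.sq_sqrt (QUB.psd_trace_re_nonneg
      (Matrix.posSemidef_conjTranspose_mul_self ((1 - A t) * S)))]
    have e1 : ((1 - A t) * S)ᴴ * ((1 - A t) * S) = (S * (1 - A t)) * S := by
      rw [hXmath t]
      calc (S * (1 - A t)) * ((1 - A t) * S)
          = S * ((1 - A t) * (1 - A t)) * S := by noncomm_ring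
        _ = (S * (1 - A t)) * S := by rw [hproj1 t]
    rw [e1, hSZS (1 - A t), Matrix.trace_mul_comm, ← hε t]
  have hsq_b : ∀ t : Fin m, b t ^ 2 = c t.1 - c (t.1 + 1) := by
    intro t
    rw [hbdef]
    rw [Real.sq_sqrt (QUB.psd_trace_re_nonneg
      (Matrix.posSemidef_conjTranspose_mul_self (((1 - A t) * W t.1) * S)))]
    have e1 : (((1 - A t) * W t.1) * S)ᴴ * (((1 - A t) * W t.1) * S)
        = (S * ((W t.1)ᴴ * ((1 - A t) * W t.1))) * S := by
      rw [conjTranspose_mul, conjTranspose_mul, conjTranspose_sub, conjTranspose_one, hAh t, hSh]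
      calc (S * ((W t.1)ᴴ * (1 - A t))) * (((1 - A t) * W t.1) * S)
          = S * ((W t.1)ᴴ * (((1 - A t) * (1 - A t)) * W t.1)) * S := by noncomm_ring
        _ = (S * ((W t.1)ᴴ * ((1 - A t) * W t.1))) * S := by rw [hproj1 t]
    have e2 : (((W t.1)ᴴ * ((1 - A t) * W t.1)) * ρ).trace
        = ((1 - A t) * (W t.1 * ρ * (W t.1)ᴴ)).trace := by
      calc (((W t.1)ᴴ * ((1 - A t) * W t.1)) * ρ).trace
          = ((W t.1)ᴴ * (((1 - A t) * W t.1) * ρ)).trace := by rw [mul_assoc]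
        _ = ((((1 - A t) * W t.1) * ρ) * (W t.1)ᴴ).trace := Matrix.trace_mul_comm _ _
        _ = ((1 - A t) * (W t.1 * ρ * (W t.1)ᴴ)).trace := by
            rw [show (((1 - A t) * W t.1) * ρ) * (W t.1)ᴴ
              = (1 - A t) * (W t.1 * ρ * (W t.1)ᴴ) from by noncomm_ring]
    rw [e1, hSZS, e2]
    have e3 : ((1 - A t) * (W t.1 * ρ * (W t.1)ᴴ)).trace
        = ((c t.1 : ℝ) : ℂ) - ((c (t.1 + 1) : ℝ) : ℂ) := by
      rw [Matrix.sub_mul, Matrix.one_mul, Matrix.trace_sub, hctr t.1]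
      congr 1
      rw [Matrix.trace_mul_comm]
      exact htrXA t
    rw [e3]
    simp [Complex.sub_re]
  have hWm1 : ((1 : Matrix (Fin d) (Fin d) ℂ) - W m) * ρ
      = ∑ t : Fin m, ((1 - A t) * W t.1) * ρ := by
    have h2 : ∀ t : Fin m, (1 - A t) * W t.1 = W t.1 - W (t.1 + 1) := by
      intro t; rw [hWsucc t]; noncomm_ring
    have h1 : (1 : Matrix (Fin d) (Fin d) ℂ) - W m = ∑ t : Fin m, (1 - A t) * W t.1 := by
      rw [Finset.sum_congr rfl fun t _ => h2 t,
        Fin.sum_univ_eq_sum_range (fun i => W i - W (i + 1)) m,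
        Finset.sum_range_sub' (fun i => W i), hW0]
    rw [h1, Finset.sum_mul]
  have hterm : ∀ t : Fin m, ((((1 - A t) * W t.1) * ρ).trace).re ≤ a t * b t := by
    intro t
    have e1 : ((1 - A t) * S)ᴴ * (((1 - A t) * W t.1) * S)
        = (S * ((1 - A t) * W t.1)) * S := by
      rw [hXmath t]
      calc (S * (1 - A t)) * (((1 - A t) * W t.1) * S)
          = S * (((1 - A t) * (1 - A t)) * W t.1) * S := by noncomm_ring
        _ = (S * ((1 - A t) * W t.1)) * S := by rw [hproj1 t]
    have e2 : ((((1 - A t) * W t.1) * ρ).trace)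
        = (((1 - A t) * S)ᴴ * (((1 - A t) * W t.1) * S)).trace := by
      rw [e1, hSZS ((1 - A t) * W t.1)]
    rw [e2]
    calc ((((1 - A t) * S)ᴴ * (((1 - A t) * W t.1) * S)).trace).re
        ≤ ‖(((1 - A t) * S)ᴴ * (((1 - A t) * W t.1) * S)).trace‖ := by
          exact Complex.re_le_norm _
      _ ≤ a t * b t := QUB.fro_cs _ _
  have hFail_eq : ∑ t : Fin m, b t ^ 2 = Fail := by
    rw [Finset.sum_congr rfl fun t _ => hsq_b t,
      Fin.sum_univ_eq_sum_range (fun i => c i - c (i + 1)) m,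
      Finset.sum_range_sub' (fun i => c i), hc0, hFail, hSuccc]
  have hLoss_eq : ∑ t : Fin m, a t ^ 2 = Loss := by
    rw [Finset.sum_congr rfl fun t _ => hsq_a t, hLoss]
  have hcs : ∑ t : Fin m, a t * b t ≤ Real.sqrt Loss * Real.sqrt Fail := by
    have h2 := Finset.sum_mul_sq_le_sq_mul_sq Finset.univ a b
    have hab : 0 ≤ ∑ t : Fin m, a t * b t :=
      Finset.sum_nonneg fun t _ => mul_nonneg (ha_nonneg t) (hb_nonneg t)
    calc ∑ t : Fin m, a t * b t = Real.sqrt ((∑ t : Fin m, a t * b t) ^ 2) :=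
          (Real.sqrt_sq hab).symm
      _ ≤ Real.sqrt ((∑ t : Fin m, a t ^ 2) * (∑ t : Fin m, b t ^ 2)) := Real.sqrt_le_sqrt h2
      _ = Real.sqrt (∑ t : Fin m, a t ^ 2) * Real.sqrt (∑ t : Fin m, b t ^ 2) :=
          Real.sqrt_mul (Finset.sum_nonneg fun t _ => sq_nonneg _) _
      _ = Real.sqrt Loss * Real.sqrt Fail := by rw [hLoss_eq, hFail_eq]
  have hsum2 : ((((1 : Matrix (Fin d) (Fin d) ℂ) - W m) * ρ).trace).re
      ≤ Real.sqrt Fail * Real.sqrt Loss := by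
    calc ((((1 : Matrix (Fin d) (Fin d) ℂ) - W m) * ρ).trace).re
        = ∑ t : Fin m, ((((1 - A t) * W t.1) * ρ).trace).re := by
          rw [hWm1, Matrix.trace_sum, Complex.re_sum]
      _ ≤ ∑ t : Fin m, a t * b t := Finset.sum_le_sum fun t _ => hterm t
      _ ≤ Real.sqrt Loss * Real.sqrt Fail := hcs
      _ = Real.sqrt Fail * Real.sqrt Loss := mul_comm _ _
  have hsplit : ((((1 : Matrix (Fin d) (Fin d) ℂ) - W m) * ρ).trace).re
      = 1 - ((W m * ρ).trace).re := by
    rw [Matrix.sub_mul, Matrix.one_mul, Matrix.trace_sub, Complex.sub_re, hρ1, Complex.one_re]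
  rw [Real.sqrt_sq (QUB.traceNorm_nonneg (S * T))]
  linarith [hbound1, hsum2, hsplit]
end

section
/- Tightness of the factor 4 in the quantum union bound: for each m ≥ 2 and small δ > 0, in ℝ² with initial state |0⟩ and projectors A_t onto the line at angle (−1)^t·δ from |0⟩, one has Loss = m·sin²δ and Fail = 1 − (1−sin²δ)(1−sin²2δ)^{m−1}; consequently Fail/Loss → (4m−3)/m as δ → 0⁺, which tends to 4 as m → ∞. -/
open Matrix Filter

/-- Projector onto the line in ℝ² at angle θ from |0⟩. -/
noncomputable def lineProj (θ : ℝ) : Matrix (Fin 2) (Fin 2) ℝ :=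
  ![![Real.cos θ ^ 2, Real.cos θ * Real.sin θ],
    ![Real.cos θ * Real.sin θ, Real.sin θ ^ 2]]

/-- Success probability of sequentially measuring |0⟩⟨0| with the projectors
`A_t` onto the lines at angles (−1)ᵗ·δ, t = 1,…,m:  tr(A_m⋯A₁ ρ A₁⋯A_m). -/
noncomputable def succProb (m : ℕ) (δ : ℝ) : ℝ :=
  let ρ : Matrix (Fin 2) (Fin 2) ℝ := ![![1, 0], ![0, 0]]
  let B := (List.ofFn (fun t : Fin m => lineProj ((-1 : ℝ) ^ (t.1 + 1) * δ))).reverse.prod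
  (B * ρ * Bᵀ).trace

lemma proj_mulVec (θ φ : ℝ) :
    (lineProj θ).mulVec ![Real.cos φ, Real.sin φ]
      = Real.cos (θ - φ) • ![Real.cos θ, Real.sin θ] := by
  funext i
  fin_cases i <;>
    simp [lineProj, mulVec, dotProduct, Fin.sum_univ_two, Real.cos_sub] <;> ring

lemma key (δ : ℝ) : ∀ m : ℕ, 1 ≤ m →
    ((List.ofFn (fun t : Fin m => lineProj ((-1 : ℝ) ^ (t.1 + 1) * δ))).reverse.prod).mulVec
        ![1, 0]
      = (Real.cos δ * Real.cos (2*δ) ^ (m - 1)) •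
          ![Real.cos ((-1 : ℝ) ^ m * δ), Real.sin ((-1 : ℝ) ^ m * δ)] := by
  intro m hm
  induction m with
  | zero => omega
  | succ n ih =>
    rcases Nat.eq_zero_or_pos n with rfl | hn
    · simp only [List.ofFn_succ, List.ofFn_zero, List.reverse_singleton, List.prod_singleton]
      funext i
      fin_cases i <;>
        simp [lineProj, mulVec, dotProduct, Fin.sum_univ_two, Real.cos_neg,
          Real.sin_neg] <;> ring
    · have hrec := ih hn
      rw [List.ofFn_succ']
      simp only [List.concat_eq_append, List.reverse_append, List.reverse_singleton,
        List.singleton_append, List.prod_cons]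
      rw [← Matrix.mulVec_mulVec]
      have hcast : (fun i : Fin n => lineProj ((-1 : ℝ) ^ ((Fin.castSucc i).1 + 1) * δ))
          = fun i : Fin n => lineProj ((-1 : ℝ) ^ (i.1 + 1) * δ) := rfl
      rw [hcast, hrec, Matrix.mulVec_smul, proj_mulVec, smul_smul]
      have hcos : Real.cos ((-1 : ℝ) ^ (n + 1) * δ - (-1 : ℝ) ^ n * δ)
          = Real.cos (2 * δ) := by
        rcases Nat.even_or_odd n with he | ho
        · rw [he.neg_one_pow]
          rw [he.add_one.neg_one_pow]
          rw [show (-1 : ℝ) * δ - 1 * δ = -(2 * δ) by ring, Real.cos_neg]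
        · rw [ho.neg_one_pow]
          rw [ho.add_one.neg_one_pow]
          ring_nf
      simp only [Fin.val_last]
      rw [hcos]
      congr 1
      rw [show n + 1 - 1 = (n - 1) + 1 by omega, pow_succ]
      ring

lemma trace_aux (B : Matrix (Fin 2) (Fin 2) ℝ) :
    (B * Matrix.of ![![1, 0], ![0, 0]] * Bᵀ).trace
      = (B.mulVec ![1, 0] 0) ^ 2 + (B.mulVec ![1, 0] 1) ^ 2 := by
  simp [Matrix.trace, Matrix.mul_apply, Fin.sum_univ_two, mulVec, dotProduct,
    Matrix.diag]
  ring

lemma succProb_eq (m : ℕ) (hm : 1 ≤ m) (δ : ℝ) :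
    succProb m δ = (1 - Real.sin δ ^ 2) * (1 - Real.sin (2 * δ) ^ 2) ^ (m - 1) := by
  rw [succProb]
  rw [show (![![1, 0], ![0, 0]] : Matrix (Fin 2) (Fin 2) ℝ)
      = Matrix.of ![![(1:ℝ), 0], ![0, 0]] from rfl]
  rw [trace_aux, key δ m hm]
  have h1 : Real.cos δ ^ 2 = 1 - Real.sin δ ^ 2 := by
    nlinarith [Real.sin_sq_add_cos_sq δ]
  have h2 : Real.cos (2 * δ) ^ 2 = 1 - Real.sin (2 * δ) ^ 2 := by
    nlinarith [Real.sin_sq_add_cos_sq (2 * δ)]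
  have h3 := Real.sin_sq_add_cos_sq ((-1 : ℝ) ^ m * δ)
  have : ((Real.cos δ * Real.cos (2 * δ) ^ (m - 1)) •
      ![Real.cos ((-1 : ℝ) ^ m * δ), Real.sin ((-1 : ℝ) ^ m * δ)]) 0 ^ 2 +
      ((Real.cos δ * Real.cos (2 * δ) ^ (m - 1)) •
      ![Real.cos ((-1 : ℝ) ^ m * δ), Real.sin ((-1 : ℝ) ^ m * δ)]) 1 ^ 2
      = Real.cos δ ^ 2 * (Real.cos (2 * δ) ^ 2) ^ (m - 1) := by
    simp only [Pi.smul_apply, smul_eq_mul, Matrix.cons_val_zero, Matrix.cons_val_one,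
      Matrix.head_cons]
    have hp : (Real.cos (2 * δ) ^ (m - 1)) ^ 2 = (Real.cos (2 * δ) ^ 2) ^ (m - 1) := by
      rw [← pow_mul, ← pow_mul, Nat.mul_comm]
    linear_combination (Real.cos δ * Real.cos (2 * δ) ^ (m - 1)) ^ 2 * h3 + Real.cos δ ^ 2 * hp
  rw [this, h1, h2]

/-- Tightness of the factor 4 in the quantum union bound. -/
theorem union_bound_factor_four_tight (m : ℕ) (hm : 2 ≤ m) :
    (∀ δ : ℝ, ∀ t : Fin m,
        ((Matrix.of ![![1, 0], ![0, 0]] : Matrix (Fin 2) (Fin 2) ℝ) *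
            (1 - lineProj ((-1 : ℝ) ^ (t.1 + 1) * δ))).trace = Real.sin δ ^ 2) ∧
    (∀ δ : ℝ, 1 - succProb m δ =
        1 - (1 - Real.sin δ ^ 2) * (1 - Real.sin (2 * δ) ^ 2) ^ (m - 1)) ∧
    Tendsto (fun δ : ℝ => (1 - succProb m δ) / (m * Real.sin δ ^ 2))
      (nhdsWithin 0 (Set.Ioi 0)) (nhds ((4 * (m : ℝ) - 3) / (m : ℝ))) ∧
    Tendsto (fun k : ℕ => (4 * (k : ℝ) - 3) / k) atTop (nhds 4) := by
  have hm1 : 1 ≤ m := le_trans one_le_two hm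
  have hmR : (0 : ℝ) < m := Nat.cast_pos.mpr hm1
  refine ⟨?_, ?_, ?_, ?_⟩
  · intro δ t
    have hc : Real.cos ((-1 : ℝ) ^ (t.1 + 1) * δ) ^ 2 = Real.cos δ ^ 2 := by
      rcases Nat.even_or_odd (t.1 + 1) with h | h
      · rw [h.neg_one_pow]; norm_num
      · rw [h.neg_one_pow]; rw [neg_one_mul, Real.cos_neg]
    have hs := Real.sin_sq_add_cos_sq δ
    simp only [Matrix.trace, Matrix.diag, Fin.sum_univ_two, Matrix.mul_apply,
      Matrix.sub_apply, Matrix.one_apply, Matrix.of_apply, lineProj,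
      Matrix.cons_val', Matrix.cons_val_zero, Matrix.cons_val_one, Matrix.head_cons,
      Matrix.head_fin_const, Matrix.empty_val']
    norm_num
    erw [Matrix.sub_apply, Matrix.one_apply_eq]
    norm_num
    linarith [hc, hs]
  · intro δ
    rw [succProb_eq m hm1]
  · set G : ℝ → ℝ := fun s =>
      (1 + 4 * (1 - s) ^ 2 * ∑ k ∈ Finset.range (m - 1), (1 - 4 * s * (1 - s)) ^ k) / m
      with hGdef
    have hG0 : G 0 = (4 * (m : ℝ) - 3) / m := by
      simp only [hGdef]
      norm_num
      rw [show ((1:ℝ) + 4 * (↑(m-1))) = 4 * (m:ℝ) - 3 by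
        push_cast [Nat.cast_sub hm1]; ring]
    have hGc : Continuous G := by
      apply Continuous.div_const
      continuity
    have h1 : Tendsto (fun δ : ℝ => Real.sin δ ^ 2) (nhdsWithin 0 (Set.Ioi 0)) (nhds 0) := by
      have : Tendsto (fun δ : ℝ => Real.sin δ ^ 2) (nhds 0) (nhds 0) := by
        have := (Real.continuous_sin.pow 2).tendsto 0
        exact (by simpa using this : Tendsto (Real.sin ^ 2) (nhds 0) (nhds 0))
      exact this.mono_left nhdsWithin_le_nhds
    have h2 : Tendsto (fun δ : ℝ => G (Real.sin δ ^ 2))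
        (nhdsWithin 0 (Set.Ioi 0)) (nhds ((4 * (m : ℝ) - 3) / m)) := by
      rw [← hG0]
      exact (hGc.continuousAt.tendsto).comp h1
    apply Tendsto.congr' _ h2
    filter_upwards [Ioo_mem_nhdsGT_of_mem
      (show (0:ℝ) ∈ Set.Ico (0:ℝ) 1 by norm_num)] with δ hδ
    have hsinpos : 0 < Real.sin δ := Real.sin_pos_of_pos_of_lt_pi hδ.1
      (lt_trans hδ.2 (by linarith [Real.pi_gt_three]))
    set s := Real.sin δ ^ 2 with hs
    have hspos : 0 < s := by positivity
    have hsin2 : Real.sin (2 * δ) ^ 2 = 4 * s * (1 - s) := by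
      rw [Real.sin_two_mul, hs]
      linear_combination 4 * Real.sin δ ^ 2 * (Real.sin_sq_add_cos_sq δ)
    have hg := geom_sum_mul (1 - 4 * s * (1 - s)) (m - 1)
    have hid : 1 - (1 - s) * (1 - 4 * s * (1 - s)) ^ (m - 1)
        = s * (1 + 4 * (1 - s) ^ 2 * ∑ k ∈ Finset.range (m - 1), (1 - 4 * s * (1 - s)) ^ k) := by
      linear_combination (1 - s) * hg
    rw [succProb_eq m hm1, hsin2, hid, hGdef]
    field_simp
  · have h : Tendsto (fun k : ℕ => 4 - 3 / (k : ℝ)) atTop (nhds (4 - 0)) :=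
      tendsto_const_nhds.sub (tendsto_const_nhds.div_atTop tendsto_natCast_atTop_atTop)
    rw [sub_zero] at h
    apply Tendsto.congr' _ h
    filter_upwards [eventually_ge_atTop 1] with k hk
    have hk0 : (k : ℝ) ≠ 0 := Nat.cast_ne_zero.mpr (by omega)
    field_simp
end
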